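/- The analytic connection on the tame symbol ⟨f,g⟩ and the canonical connection of its hermitian structure coincide if and only if the globally defined imaginary 1-form r₂(f,g) = π₁(d log f)·log|g| − log|f|·π₁(d log g) vanishes identically on X. -/

import Mathlib

noncomputable section

/-- Imaginary-part projection `π₁(z) = (z - z̄)/2`. -/
def pi1 (w : ℂ) : ℂ := (w - (starRingEnd ℂ) w) / 2


lemma pi1_eq (z : ℂ) : pi1 z = (z.im : ℂ) * Complex.I := by
  unfold pi1; rw [Complex.sub_conj]; push_cast; ring

lemma pi1_eq_zero_iff (z : ℂ) : pi1 z = 0 ↔ z.im = 0 := by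
  rw [pi1_eq, mul_eq_zero]
  simp [Complex.I_ne_zero, Complex.ofReal_eq_zero]

lemma ofReal_re_eq (z : ℂ) : ((z.re : ℝ) : ℂ) = (z + (starRingEnd ℂ) z) / 2 := by
  rw [Complex.add_conj]; push_cast; ring

lemma logabs_fderiv (U : Set ℂ) (hU : IsOpen U) (g : ℂ → ℂ) (hg0 : ∀ u ∈ U, g u ≠ 0)
    (hgd : DifferentiableOn ℂ g U) (u : ℂ) (hu : u ∈ U) :
    HasFDerivAt (fun w => Real.log (‖g w‖))
      (Complex.reCLM.comp (ContinuousLinearMap.restrictScalars ℝ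
        ((1 : ℂ →L[ℂ] ℂ).smulRight ((1:ℂ)⁻¹ * (deriv g u / g u))))) u := by
  have hUn : U ∈ nhds u := hU.mem_nhds hu
  have hgu := hg0 u hu
  have hgder : HasDerivAt g (deriv g u) u := ((hgd u hu).differentiableAt hUn).hasDerivAt
  have e : g u / g u = 1 := div_self hgu
  have hlog1 : HasDerivAt Complex.log (1:ℂ)⁻¹ ((fun w => g w / g u) u) := by
    simp only [e]; exact Complex.hasDerivAt_log Complex.one_mem_slitPlane
  have hcomp : HasDerivAt (fun w => Complex.log (g w / g u)) ((1:ℂ)⁻¹ * (deriv g u / g u)) u :=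
    by have := hlog1.comp u (hgder.div_const (g u)); exact this
  have hre := Complex.reCLM.hasFDerivAt.comp u ((hcomp.hasFDerivAt).restrictScalars ℝ)
  have hre2 := hre.const_add (Real.log (‖g u‖))
  refine hre2.congr_of_eventuallyEq (Filter.eventuallyEq_of_mem hUn fun w hw => ?_)
  have h1 : ‖g w‖ ≠ 0 := norm_ne_zero_iff.mpr (hg0 w hw)
  have h2 : ‖g u‖ ≠ 0 := norm_ne_zero_iff.mpr hgu
  show Real.log (‖g w‖) = Real.log (‖g u‖) + (Complex.log (g w / g u)).re
  rw [Complex.log_re, norm_div, Real.log_div h1 h2]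
  ring

set_option maxHeartbeats 1600000 in
lemma main_aux (U : Set ℂ) (hU : IsOpen U) (f g L : ℂ → ℂ)
    (hf0 : ∀ u ∈ U, f u ≠ 0) (hg0 : ∀ u ∈ U, g u ≠ 0)
    (hL : ∀ u ∈ U, Complex.exp (L u) = f u)
    (hLd : DifferentiableOn ℂ L U) (hgd : DifferentiableOn ℂ g U)
    (u : ℂ) (hu : u ∈ U) :
    (∀ v : ℂ,
        -(1 / (2 * Real.pi * Complex.I)) * L u * (deriv g u / g u) * v
          = (1 / 2) *
            (fderiv ℝ (fun w =>
                -(1 / (Real.pi * Complex.I)) * pi1 (L w)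
                  * (Real.log (‖g w‖) : ℂ)) u v
              - Complex.I * fderiv ℝ (fun w =>
                -(1 / (Real.pi * Complex.I)) * pi1 (L w)
                  * (Real.log (‖g w‖) : ℂ)) u (Complex.I * v)))
    ↔ (∀ v : ℂ,
        pi1 (deriv f u / f u * v) * (Real.log (‖g u‖) : ℂ)
          - (Real.log (‖f u‖) : ℂ) * pi1 (deriv g u / g u * v) = 0) := by
  have hUn : U ∈ nhds u := hU.mem_nhds hu
  have hfu := hf0 u hu
  have hgu := hg0 u hu
  have hLder : HasDerivAt L (deriv L u) u := ((hLd u hu).differentiableAt hUn).hasDerivAt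
  -- relation between deriv f and deriv L
  have hexp : HasDerivAt f (Complex.exp (L u) * deriv L u) u := by
    have h1 : HasDerivAt (fun w => Complex.exp (L w)) (Complex.exp (L u) * deriv L u) u :=
      hLder.cexp
    exact h1.congr_of_eventuallyEq (Filter.eventuallyEq_of_mem hUn fun w hw => (hL w hw).symm)
  have hdf : deriv f u = f u * deriv L u := by rw [← hL u hu]; exact hexp.deriv
  have hrfl : deriv f u / f u = deriv L u := by rw [hdf, mul_div_assoc]; field_simp
  have hlogf : Real.log (‖f u‖) = (L u).re := by
    rw [← hL u hu, Complex.norm_exp, Real.log_exp]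
  -- the fderiv of the metric potential
  have hLf : HasFDerivAt L (ContinuousLinearMap.restrictScalars ℝ
      ((1 : ℂ →L[ℂ] ℂ).smulRight (deriv L u))) u := (hLder.hasFDerivAt).restrictScalars ℝ
  have hconjL := (Complex.conjCLE.hasFDerivAt).comp u hLf
  have hpi := HasFDerivAt.mul_const (𝕜 := ℝ) (hLf.sub hconjL) ((2:ℂ)⁻¹)
  have hlogC := Complex.ofRealCLM.hasFDerivAt.comp u (logabs_fderiv U hU g hg0 hgd u hu)
  have hpc := HasFDerivAt.const_mul (𝕜 := ℝ) hpi (-(1 / (Real.pi * Complex.I)))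
  have hF0 := HasFDerivAt.mul (𝕜 := ℝ) hpc hlogC
  have hF : HasFDerivAt (fun w =>
      -(1 / (Real.pi * Complex.I)) * pi1 (L w) * (Real.log (‖g w‖) : ℂ))
      (?_ : ℂ →L[ℝ] ℂ) u := by
    refine hF0.congr_of_eventuallyEq (Filter.Eventually.of_forall fun w => ?_)
    simp only [pi1, Complex.conjCLE_apply, Function.comp_apply, Complex.ofRealCLM_apply,
      Pi.mul_apply, Pi.sub_apply]
    ring
  have hval := hF.fderiv
  set A := deriv L u with hA
  set B := deriv g u / g u with hB
  set r : ℝ := Real.log (‖g u‖) with hr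
  set a := L u with ha
  have hca : (starRingEnd ℂ) a = 2 * ((a.re : ℝ) : ℂ) - a := by
    have := Complex.add_conj a
    push_cast at this ⊢
    linear_combination this
  set c : ℂ := A * (r : ℂ) - ((a.re : ℝ) : ℂ) * B with hc
  have hD : ∀ v : ℂ, fderiv ℝ (fun w =>
      -(1 / (Real.pi * Complex.I)) * pi1 (L w) * (Real.log (‖g w‖) : ℂ)) u v
      = -(1 / (Real.pi * Complex.I)) * ((a - (starRingEnd ℂ) a) * 2⁻¹)
          * (((v * ((1:ℂ)⁻¹ * B)).re : ℝ) : ℂ)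
        + ((r : ℝ) : ℂ) * (-(1 / (Real.pi * Complex.I)) * (2⁻¹ * (v * A - (starRingEnd ℂ) (v * A)))) := by
    intro v
    rw [hval]
    simp only [ContinuousLinearMap.add_apply, ContinuousLinearMap.smul_apply,
      ContinuousLinearMap.comp_apply, ContinuousLinearMap.coe_smul', Pi.smul_apply,
      ContinuousLinearMap.coe_restrictScalars', ContinuousLinearMap.smulRight_apply,
      ContinuousLinearMap.one_apply, ContinuousLinearEquiv.coe_coe, Complex.conjCLE_apply,
      Complex.ofRealCLM_apply, Complex.reCLM_apply, smul_eq_mul,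
      ContinuousLinearMap.coe_sub', Pi.sub_apply, Function.comp_apply]
    rfl
  have heq : ∀ v : ℂ,
      (-(1 / (2 * Real.pi * Complex.I)) * a * B * v)
        - (1 / 2) * ((fderiv ℝ (fun w =>
                -(1 / (Real.pi * Complex.I)) * pi1 (L w)
                  * (Real.log (‖g w‖) : ℂ)) u v)
              - Complex.I * (fderiv ℝ (fun w =>
                -(1 / (Real.pi * Complex.I)) * pi1 (L w)
                  * (Real.log (‖g w‖) : ℂ)) u (Complex.I * v)))
      = (1 / (2 * Real.pi * Complex.I)) * (c * v) := by
    intro v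
    rw [hD v, hD (Complex.I * v)]
    simp only [hc, ofReal_re_eq, map_mul, map_one, map_inv₀, Complex.conj_I,
      one_div, mul_inv, Complex.inv_I]
    have hI3 : Complex.I ^ 3 = -Complex.I := by
      rw [pow_succ, Complex.I_sq]; ring
    have hI4 : Complex.I ^ 4 = 1 := by
      rw [(by norm_num : (4:ℕ) = 2*2), pow_mul, Complex.I_sq]; norm_num
    ring_nf
    simp only [Complex.I_sq, hI3, hI4]
    ring
  constructor
  · intro H
    have hc0 : c = 0 := by
      have hne : (1 / (2 * (Real.pi:ℂ) * Complex.I)) ≠ 0 := by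
        apply div_ne_zero one_ne_zero
        simp [Real.pi_ne_zero, Complex.I_ne_zero, Complex.ofReal_ne_zero]
      have h0 : (1 / (2 * (Real.pi:ℂ) * Complex.I)) * (c * 1) = 0 := by
        rw [← heq 1]
        exact sub_eq_zero_of_eq (H 1)
      rcases mul_eq_zero.mp h0 with h | h
      · exact absurd h hne
      · simpa using h
    intro v
    rw [hrfl, hlogf]
    have key : pi1 (A * v) * ((r:ℝ) : ℂ) - (((a.re : ℝ)) : ℂ) * pi1 (B * v) = pi1 (c * v) := by
      simp only [pi1, hc, map_mul, map_sub, Complex.conj_ofReal]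
      ring
    rw [key, hc0]
    simp [pi1]
  · intro H
    have hc0 : c = 0 := by
      have key : ∀ v : ℂ, pi1 (c * v) = 0 := by
        intro v
        have h := H v
        rw [hrfl, hlogf] at h
        have key2 : pi1 (A * v) * ((r:ℝ) : ℂ) - (((a.re : ℝ)) : ℂ) * pi1 (B * v) = pi1 (c * v) := by
          simp only [pi1, hc, map_mul, map_sub, Complex.conj_ofReal]
          ring
        rw [← key2]
        exact h
      have h1 := (pi1_eq_zero_iff _).mp (key 1)
      have h2 := (pi1_eq_zero_iff _).mp (key Complex.I)
      rw [mul_one] at h1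
      rw [Complex.mul_I_im] at h2
      exact Complex.ext h2 h1
    intro v
    have h := heq v
    rw [hc0] at h
    simp only [zero_mul, mul_zero] at h
    exact sub_eq_zero.mp h

/-- Proposition 4.6 of the paper: on an open set `U` where `f, g` are invertible
holomorphic and `L` is a branch of `log f`, the analytic connection of the tame
symbol `⟨f,g⟩`, locally `−(1/2πi)·L·dg/g`, coincides with the canonical connection
`∂ log ρ` of its hermitian structure `log ρ = −(1/πi)·π₁(L)·log|g|`
(here `∂h(v) = (1/2)(dh(v) − i·dh(iv))`), if and only if the globally defined
imaginary 1-form `r₂(f,g) = π₁(d log f)·log|g| − log|f|·π₁(d log g)` vanishes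
identically. -/
theorem stmt11 (U : Set ℂ) (hU : IsOpen U) (f g L : ℂ → ℂ)
    (hf0 : ∀ u ∈ U, f u ≠ 0) (hg0 : ∀ u ∈ U, g u ≠ 0)
    (hL : ∀ u ∈ U, Complex.exp (L u) = f u)
    (hLd : DifferentiableOn ℂ L U) (hgd : DifferentiableOn ℂ g U)
    (hfd : DifferentiableOn ℂ f U) :
    (∀ u ∈ U, ∀ v : ℂ,
        -(1 / (2 * Real.pi * Complex.I)) * L u * (deriv g u / g u) * v
          = (1 / 2) *
            (fderiv ℝ (fun w =>
                -(1 / (Real.pi * Complex.I)) * pi1 (L w)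
                  * (Real.log (‖g w‖) : ℂ)) u v
              - Complex.I * fderiv ℝ (fun w =>
                -(1 / (Real.pi * Complex.I)) * pi1 (L w)
                  * (Real.log (‖g w‖) : ℂ)) u (Complex.I * v)))
    ↔ (∀ u ∈ U, ∀ v : ℂ,
        pi1 (deriv f u / f u * v) * (Real.log (‖g u‖) : ℂ)
          - (Real.log (‖f u‖) : ℂ) * pi1 (deriv g u / g u * v) = 0) := by
  constructor
  · intro H u hu
    exact (main_aux U hU f g L hf0 hg0 hL hLd hgd u hu).mp (H u hu)
  · intro H u hu
    exact (main_aux U hU f g L hf0 hg0 hL hLd hgd u hu).mpr (H u hu)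

end
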